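/- (Cochran, part 2) Let X be an isotropic Gaussian random vector on ℝⁿ with law N(μ, σ²Iₙ), let F ⊆ ℝⁿ be a linear subspace, and let P_F and P_{F⊥} denote the orthogonal projections onto F and its orthogonal complement F⊥ respectively. Then the random vectors P_F X and P_{F⊥} X are independent. -/

import Mathlib

open Matrix MeasureTheory ProbabilityTheory Classical
open scoped ENNReal Real

lemma lintegral_pi_prod {n : ℕ} (μ : Measure ℝ) [SigmaFinite μ] (f : Fin n → ℝ → ℝ≥0∞)
    (hf : ∀ i, Measurable (f i)) :
    ∫⁻ x, ∏ i, f i (x i) ∂(Measure.pi fun _ : Fin n => μ) = ∏ i, ∫⁻ t, f i t ∂μ := by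
  induction n with
  | zero => simp
  | succ n ih =>
    have h := (measurePreserving_piFinSuccAbove (fun _ : Fin (n+1) => μ) 0).symm
    rw [← h.lintegral_comp (f := fun x => ∏ i, f i (x i))
      (Finset.measurable_prod _ fun i _ => (hf i).comp (measurable_pi_apply i))]
    simp only [MeasurableEquiv.piFinSuccAbove_symm_apply, Fin.insertNthEquiv,
      Fin.prod_univ_succ, Fin.insertNth_zero, Equiv.coe_fn_mk, Fin.cons_zero, Fin.cons_succ,
      Fin.zero_succAbove, cast_eq]
    rw [lintegral_prod_mul (f := f 0) (g := fun y : Fin n → ℝ => ∏ x : Fin n, f x.succ (y x))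
      (hf 0).aemeasurable
      (Finset.measurable_prod _ fun i _ =>
        (hf i.succ).comp (measurable_pi_apply i)).aemeasurable]
    rw [ih (fun i => f i.succ) (fun i => hf i.succ)]

lemma measurable_gpdf : Measurable (gaussianPDF 0 1) := measurable_gaussianPDF 0 1

lemma gaussian_pi_withDensity (n : ℕ) :
    (Measure.pi fun _ : Fin n => gaussianReal 0 1)
      = (Measure.pi fun _ : Fin n => (volume : Measure ℝ)).withDensity
          (fun x => ∏ i, gaussianPDF 0 1 (x i)) := by
  refine Measure.pi_eq fun s hs => ?_
  rw [withDensity_apply _ (MeasurableSet.univ_pi hs)]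
  have : ∀ x : Fin n → ℝ, (Set.univ.pi s).indicator (fun x => ∏ i, gaussianPDF 0 1 (x i)) x
      = ∏ i, (s i).indicator (gaussianPDF 0 1) (x i) := by
    intro x
    by_cases hx : x ∈ Set.univ.pi s
    · rw [Set.indicator_of_mem hx]
      exact Finset.prod_congr rfl fun i _ =>
        (Set.indicator_of_mem (hx i (Set.mem_univ i)) _).symm
    · rw [Set.indicator_of_notMem hx]
      have hx' : ¬ ∀ i, x i ∈ s i := fun h => hx fun i _ => h i
      obtain ⟨i, hi⟩ := not_forall.mp hx'
      exact (Finset.prod_eq_zero (Finset.mem_univ i)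
        (by rw [Set.indicator_of_notMem hi])).symm
  rw [← lintegral_indicator (MeasurableSet.univ_pi hs)]
  simp_rw [this]
  rw [lintegral_pi_prod _ _ (fun i => measurable_gpdf.indicator (hs i))]
  refine Finset.prod_congr rfl fun i _ => ?_
  rw [lintegral_indicator (hs i), ← gaussianReal_apply 0 one_ne_zero]

lemma map_withDensity_equiv {α β : Type*} [MeasurableSpace α] [MeasurableSpace β]
    (e : α ≃ᵐ β) (ν : Measure α) (g : β → ℝ≥0∞) (hg : Measurable g) :
    Measure.map e (ν.withDensity (fun a => g (e a))) = (Measure.map e ν).withDensity g := by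
  ext s hs
  rw [Measure.map_apply e.measurable hs, withDensity_apply _ (e.measurable hs),
    withDensity_apply _ hs, setLIntegral_map hs hg e.measurable]

lemma gpdf_prod {n : ℕ} (x : Fin n → ℝ) :
    ∏ i, gaussianPDF 0 1 (x i)
      = ENNReal.ofReal ((Real.sqrt (2 * π))⁻¹ ^ n * Real.exp (-(∑ i, x i ^ 2) / 2)) := by
  simp_rw [gaussianPDF, gaussianPDFReal]
  rw [← ENNReal.ofReal_prod_of_nonneg]
  · congr 1
    rw [Finset.prod_mul_distrib, Finset.prod_const, ← Real.exp_sum]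
    simp [Finset.card_univ, neg_div, Finset.sum_div, Finset.sum_neg_distrib]
  · intro i _
    positivity

lemma sum_sq_mulVec {n : ℕ} (U : Matrix (Fin n) (Fin n) ℝ) (hU' : Uᵀ * U = 1)
    (x : Fin n → ℝ) : ∑ i, (U.mulVec x i) ^ 2 = ∑ i, x i ^ 2 := by
  have h1 : U.mulVec x ⬝ᵥ U.mulVec x = x ⬝ᵥ x := by
    rw [dotProduct_mulVec]
    have : vecMul (U.mulVec x) U = x := by
      rw [← vecMul_transpose, vecMul_vecMul, hU', vecMul_one]
    rw [this]
  simpa [dotProduct, sq] using h1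

lemma measurable_mulVec {n m : ℕ} (M : Matrix (Fin m) (Fin n) ℝ) :
    Measurable (M.mulVec) := by
  apply measurable_pi_lambda
  intro i
  simp only [Matrix.mulVec, dotProduct]
  exact Finset.measurable_sum _ fun j _ => by fun_prop

set_option maxHeartbeats 1000000 in
lemma map_mulVec_gaussian_pi {n : ℕ} (U : Matrix (Fin n) (Fin n) ℝ) (hU : U * Uᵀ = 1) :
    Measure.map U.mulVec (Measure.pi fun _ : Fin n => gaussianReal 0 1)
      = Measure.pi fun _ : Fin n => gaussianReal 0 1 := by
  have hU' : Uᵀ * U = 1 := mul_eq_one_comm.mp hU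
  have hdet : U.det ≠ 0 := by
    intro h
    have := congrArg Matrix.det hU
    rw [Matrix.det_mul, Matrix.det_transpose, h, mul_zero, Matrix.det_one] at this
    exact zero_ne_one this
  have hdetabs : |U.det| = 1 := by
    have := congrArg Matrix.det hU
    rw [Matrix.det_mul, Matrix.det_transpose, Matrix.det_one] at this
    nlinarith [abs_nonneg U.det, sq_abs U.det]
  -- measurable equiv from U
  have hinv : Invertible U := invertibleOfRightInverse U Uᵀ hU
  let le : (Fin n → ℝ) ≃ₗ[ℝ] (Fin n → ℝ) := U.toLinearEquiv' hinv
  have hle : ∀ x, le x = U.mulVec x := fun x => Matrix.toLin'_apply U x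
  have hlesymm : Measurable (le.symm : (Fin n → ℝ) → (Fin n → ℝ)) := by
    have : (le.symm : (Fin n → ℝ) → (Fin n → ℝ)) = (U⁻¹).mulVec := by
      funext x
      have : le ((U⁻¹).mulVec x) = x := by
        rw [hle, Matrix.mulVec_mulVec, Matrix.mul_nonsing_inv U (isUnit_iff_ne_zero.mpr hdet), Matrix.one_mulVec]
      exact (LinearEquiv.symm_apply_eq le).mpr this.symm
    rw [this]
    exact measurable_mulVec _
  let e : (Fin n → ℝ) ≃ᵐ (Fin n → ℝ) :=
    { toEquiv := le.toEquiv
      measurable_toFun := by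
        show Measurable (le : (Fin n → ℝ) → (Fin n → ℝ))
        have : (le : (Fin n → ℝ) → (Fin n → ℝ)) = U.mulVec := funext hle
        rw [this]; exact measurable_mulVec U
      measurable_invFun := hlesymm }
  have he : (e : (Fin n → ℝ) → (Fin n → ℝ)) = U.mulVec := funext hle
  set g : (Fin n → ℝ) → ℝ≥0∞ := fun x => ∏ i, gaussianPDF 0 1 (x i) with hgdef
  have hg : Measurable g := Finset.measurable_prod _ fun i _ =>
    (measurable_gaussianPDF 0 1).comp (measurable_pi_apply i)
  have hge : ∀ x, g (U.mulVec x) = g x := by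
    intro x
    rw [hgdef]
    simp only
    rw [gpdf_prod, gpdf_prod, sum_sq_mulVec U hU']
  have hvol : Measure.map U.mulVec (Measure.pi fun _ : Fin n => (volume : Measure ℝ))
      = Measure.pi fun _ : Fin n => (volume : Measure ℝ) := by
    have := Real.map_matrix_volume_pi_eq_smul_volume_pi (M := U) hdet
    rw [Matrix.toLin'_apply'] at this
    have hc : (Matrix.mulVecLin U : (Fin n → ℝ) → (Fin n → ℝ)) = U.mulVec := rfl
    rw [hc] at this
    rw [← volume_pi, this, abs_inv, hdetabs]
    simp
  calc Measure.map U.mulVec (Measure.pi fun _ : Fin n => gaussianReal 0 1)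
      = Measure.map e ((Measure.pi fun _ : Fin n => (volume : Measure ℝ)).withDensity
          fun a => g (e a)) := by
        rw [gaussian_pi_withDensity n, he]
        exact congrArg (Measure.map U.mulVec) (congrArg (Measure.withDensity _) (funext fun a => (hge a).symm))
    _ = (Measure.map e (Measure.pi fun _ : Fin n => (volume : Measure ℝ))).withDensity g :=
        map_withDensity_equiv e _ g hg
    _ = (Measure.pi fun _ : Fin n => (volume : Measure ℝ)).withDensity g := by rw [he, hvol]
    _ = Measure.pi fun _ : Fin n => gaussianReal 0 1 := (gaussian_pi_withDensity n).symm

set_option maxHeartbeats 1000000 in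
lemma exists_adapted_U {n : ℕ} (F : Submodule ℝ (EuclideanSpace ℝ (Fin n)))
    (P Q : Matrix (Fin n) (Fin n) ℝ)
    (hP : ∀ x : EuclideanSpace ℝ (Fin n),
      Matrix.toEuclideanLin P x = (F.orthogonalProjectionOnto x : EuclideanSpace ℝ (Fin n)))
    (hQ : ∀ x : EuclideanSpace ℝ (Fin n),
      Matrix.toEuclideanLin Q x = (Fᗮ.orthogonalProjectionOnto x : EuclideanSpace ℝ (Fin n))) :
    ∃ (U : Matrix (Fin n) (Fin n) ℝ) (p : Fin n → Bool),
      U * Uᵀ = 1 ∧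
      P = Uᵀ * (Matrix.diagonal fun i => if p i then (1:ℝ) else 0) * U ∧
      Q = Uᵀ * (1 - Matrix.diagonal fun i => if p i then (1:ℝ) else 0) * U := by
  classical
  have hrank : Module.finrank ℝ F + Module.finrank ℝ Fᗮ = n := by
    rw [F.finrank_add_finrank_orthogonal, finrank_euclideanSpace_fin]
  let bF := stdOrthonormalBasis ℝ F
  let bO := stdOrthonormalBasis ℝ Fᗮ
  let eqv : Fin (Module.finrank ℝ F) ⊕ Fin (Module.finrank ℝ Fᗮ) ≃ Fin n :=
    finSumFinEquiv.trans (finCongr hrank)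
  let u : Fin n → EuclideanSpace ℝ (Fin n) := fun i =>
    Sum.elim (fun j => (bF j : EuclideanSpace ℝ (Fin n)))
      (fun j => (bO j : EuclideanSpace ℝ (Fin n))) (eqv.symm i)
  let p : Fin n → Bool := fun i => (eqv.symm i).isLeft
  have humem : ∀ i, (p i = true → u i ∈ F) ∧ (p i = false → u i ∈ Fᗮ) := by
    intro i
    simp only [p, u]
    rcases eqv.symm i with j | j <;> simp [Submodule.coe_mem]
  have honb : ∀ i j, (inner ℝ (u i) (u j) : ℝ) = if i = j then 1 else 0 := by
    have key : ∀ a b, (inner ℝ (Sum.elim (fun j => (bF j : EuclideanSpace ℝ (Fin n)))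
        (fun j => (bO j : EuclideanSpace ℝ (Fin n))) a)
        (Sum.elim (fun j => (bF j : EuclideanSpace ℝ (Fin n)))
        (fun j => (bO j : EuclideanSpace ℝ (Fin n))) b) : ℝ)
        = if a = b then 1 else 0 := by
      rintro (a | a) (b | b)
      · simp only [Sum.elim_inl]
        rw [← Submodule.coe_inner, orthonormal_iff_ite.mp bF.orthonormal]
        simp [Sum.inl.injEq]
      · simp only [Sum.elim_inl, Sum.elim_inr]
        rw [Submodule.inner_right_of_mem_orthogonal (Submodule.coe_mem (bF a))
          (Submodule.coe_mem (bO b))]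
        simp
      · simp only [Sum.elim_inl, Sum.elim_inr]
        rw [Submodule.inner_left_of_mem_orthogonal (Submodule.coe_mem (bF b))
          (Submodule.coe_mem (bO a))]
        simp
      · simp only [Sum.elim_inr]
        rw [← Submodule.coe_inner, orthonormal_iff_ite.mp bO.orthonormal]
        simp [Sum.inr.injEq]
    intro i j
    simp only [u]
    rw [key]
    simp [Equiv.apply_eq_iff_eq_symm_apply, eq_comm]
  have honb' : ∀ i j, ∑ k, u i k * u j k = if i = j then (1:ℝ) else 0 := by
    intro i j
    rw [← honb i j, PiLp.inner_apply]
    simp [starRingEnd_apply]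
    exact Finset.sum_congr rfl fun _ _ => mul_comm _ _
  set U : Matrix (Fin n) (Fin n) ℝ := Matrix.of fun i j => u i j with hUdef
  have hU : U * Uᵀ = 1 := by
    ext i j
    rw [Matrix.mul_apply]
    simp only [hUdef, Matrix.of_apply, Matrix.transpose_apply]
    rw [honb' i j]
    simp [Matrix.one_apply]
  have hU' : Uᵀ * U = 1 := mul_eq_one_comm.mp hU
  have hPapply : ∀ x : EuclideanSpace ℝ (Fin n),
      P.mulVec x = ((F.orthogonalProjectionOnto x : EuclideanSpace ℝ (Fin n)) : Fin n → ℝ) := by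
    intro x
    rw [← hP x]
    exact (Matrix.toLin'_apply P x).symm
  have hQapply : ∀ x : EuclideanSpace ℝ (Fin n),
      Q.mulVec x = ((Fᗮ.orthogonalProjectionOnto x : EuclideanSpace ℝ (Fin n)) : Fin n → ℝ) := by
    intro x
    rw [← hQ x]
    exact (Matrix.toLin'_apply Q x).symm
  have hprojP : ∀ j, P.mulVec (u j) = ((if p j then u j else 0 : EuclideanSpace ℝ (Fin n)) : Fin n → ℝ) := by
    intro j
    rw [hPapply]
    by_cases h : p j
    · rw [if_pos h]
      have h2 := (Submodule.starProjection_eq_self_iff (K := F) (v := u j)).mpr ((humem j).1 h)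
      exact congrArg WithLp.ofLp h2
    · rw [if_neg h,
        Submodule.orthogonalProjectionOnto_apply_of_mem_orthogonal
          ((humem j).2 (by simp [Bool.eq_false_iff, h]))]
      rfl
  have hprojQ : ∀ j, Q.mulVec (u j) = ((if p j then 0 else u j : EuclideanSpace ℝ (Fin n)) : Fin n → ℝ) := by
    intro j
    rw [hQapply]
    by_cases h : p j
    · rw [if_pos h,
        Submodule.orthogonalProjectionOnto_apply_of_mem_orthogonal
          (Submodule.le_orthogonal_orthogonal F ((humem j).1 h))]
      rfl
    · rw [if_neg h]
      have h2 := (Submodule.starProjection_eq_self_iff (K := Fᗮ) (v := u j)).mpr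
        ((humem j).2 (Bool.eq_false_iff.mpr h))
      exact congrArg WithLp.ofLp h2
  have hmulP : ∀ i j, (U * P * Uᵀ) i j = ∑ k, u i k * (P.mulVec (u j)) k := by
    intro i j
    rw [Matrix.mul_assoc, Matrix.mul_apply]
    refine Finset.sum_congr rfl fun k _ => ?_
    simp [hUdef, Matrix.mul_apply, Matrix.mulVec, dotProduct]
  have hmulQ : ∀ i j, (U * Q * Uᵀ) i j = ∑ k, u i k * (Q.mulVec (u j)) k := by
    intro i j
    rw [Matrix.mul_assoc, Matrix.mul_apply]
    refine Finset.sum_congr rfl fun k _ => ?_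
    simp [hUdef, Matrix.mul_apply, Matrix.mulVec, dotProduct]
  set D : Matrix (Fin n) (Fin n) ℝ := Matrix.diagonal fun i => if p i then (1:ℝ) else 0 with hDdef
  have hUPUt : U * P * Uᵀ = D := by
    ext i j
    rw [hmulP i j, hprojP j]
    by_cases h : p j
    · rw [if_pos h]
      rw [honb' i j]
      by_cases hij : i = j
      · subst hij
        simp [hDdef, Matrix.diagonal_apply_eq, h]
      · simp [hDdef, Matrix.diagonal_apply_ne _ hij, hij]
    · rw [if_neg h]
      have : ∀ k, ((0 : EuclideanSpace ℝ (Fin n)) : Fin n → ℝ) k = 0 := fun k => rfl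
      simp only [this, mul_zero, Finset.sum_const_zero]
      by_cases hij : i = j
      · subst hij
        simp [hDdef, Matrix.diagonal_apply_eq, h]
      · simp [hDdef, Matrix.diagonal_apply_ne _ hij]
  have hUQUt : U * Q * Uᵀ = 1 - D := by
    ext i j
    rw [hmulQ i j, hprojQ j]
    by_cases h : p j
    · rw [if_pos h]
      have : ∀ k, ((0 : EuclideanSpace ℝ (Fin n)) : Fin n → ℝ) k = 0 := fun k => rfl
      simp only [this, mul_zero, Finset.sum_const_zero]
      by_cases hij : i = j
      · subst hij
        simp [hDdef, Matrix.sub_apply, Matrix.one_apply_eq, Matrix.diagonal_apply_eq, h]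
      · simp [hDdef, Matrix.sub_apply, Matrix.one_apply_ne hij, Matrix.diagonal_apply_ne _ hij]
    · rw [if_neg h]
      rw [honb' i j]
      by_cases hij : i = j
      · subst hij
        simp [hDdef, Matrix.sub_apply, Matrix.one_apply_eq, Matrix.diagonal_apply_eq, h]
      · simp [hDdef, Matrix.sub_apply, Matrix.one_apply_ne hij, Matrix.diagonal_apply_ne _ hij, hij]
  have recover : ∀ M : Matrix (Fin n) (Fin n) ℝ, Uᵀ * (U * M * Uᵀ) * U = M := by
    intro M
    calc Uᵀ * (U * M * Uᵀ) * U = (Uᵀ * U) * M * (Uᵀ * U) := by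
          simp only [Matrix.mul_assoc]
      _ = M := by rw [hU', Matrix.one_mul, Matrix.mul_one]
  refine ⟨U, p, hU, ?_, ?_⟩
  · show P = Uᵀ * D * U
    rw [← hUPUt, recover P]
  · show Q = Uᵀ * (1 - D) * U
    rw [← hUQUt, recover Q]

noncomputable def multiGaussian {n : ℕ} (m : Fin n → ℝ) (S : Matrix (Fin n) (Fin n) ℝ) :
    Measure (Fin n → ℝ) :=
  if hS : S.PosSemidef then
    Measure.map (fun x => m + ((hS.1.eigenvectorUnitary : Matrix (Fin n) (Fin n) ℝ) *
      diagonal (Real.sqrt ∘ hS.1.eigenvalues) *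
      (star hS.1.eigenvectorUnitary : Matrix (Fin n) (Fin n) ℝ)).mulVec x)
      (Measure.pi fun _ : Fin n => gaussianReal 0 1)
  else 0




set_option maxHeartbeats 1000000 in
/-- Cochran, part 2: if `X ~ N(μ, σ²Iₙ)` and `P`, `Q` are the matrices of the orthogonal
projections onto a subspace `F ⊆ ℝⁿ` and onto `Fᗮ`, then `P X` and `Q X` are independent. -/
theorem cochran_indep {Ω : Type*} [MeasurableSpace Ω] (Pr : Measure Ω) [IsProbabilityMeasure Pr]
    {n : ℕ} (hn : 1 ≤ n) (μ : Fin n → ℝ) (σ : ℝ) (hσ : 0 < σ)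
    (X : Ω → Fin n → ℝ) (hX : Measurable X)
    (hlaw : Measure.map X Pr = multiGaussian μ (σ ^ 2 • (1 : Matrix (Fin n) (Fin n) ℝ)))
    (F : Submodule ℝ (EuclideanSpace ℝ (Fin n))) (P Q : Matrix (Fin n) (Fin n) ℝ)
    (hP : ∀ x : EuclideanSpace ℝ (Fin n),
      Matrix.toEuclideanLin P x = (F.orthogonalProjectionOnto x : EuclideanSpace ℝ (Fin n)))
    (hQ : ∀ x : EuclideanSpace ℝ (Fin n),
      Matrix.toEuclideanLin Q x = (Fᗮ.orthogonalProjectionOnto x : EuclideanSpace ℝ (Fin n))) :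
    IndepFun (fun ω => P.mulVec (X ω)) (fun ω => Q.mulVec (X ω)) Pr := by
  classical
  obtain ⟨U, p, hU, hPdec, hQdec⟩ := exists_adapted_U F P Q hP hQ
  have hU' : Uᵀ * U = 1 := mul_eq_one_comm.mp hU
  set D : Matrix (Fin n) (Fin n) ℝ := Matrix.diagonal fun i => if p i then (1:ℝ) else 0 with hD
  set G : Measure (Fin n → ℝ) := Measure.pi fun _ : Fin n => gaussianReal 0 1 with hG
  -- rewrite the law
  have hsig : Matrix.PosSemidef (σ • (1 : Matrix (Fin n) (Fin n) ℝ)) := by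
    rw [Matrix.smul_one_eq_diagonal]
    exact Matrix.posSemidef_diagonal_iff.mpr fun i => hσ.le
  have hsq : (σ • (1 : Matrix (Fin n) (Fin n) ℝ)) ^ 2 = σ ^ 2 • 1 := by
    rw [sq, smul_mul_smul_comm, Matrix.one_mul, sq]
  have hS : (σ ^ 2 • (1 : Matrix (Fin n) (Fin n) ℝ)).PosSemidef := hsq ▸ hsig.pow 2
  have hsqrt : ((hS.1.eigenvectorUnitary : Matrix (Fin n) (Fin n) ℝ) *
      diagonal (Real.sqrt ∘ hS.1.eigenvalues) *
      (star hS.1.eigenvectorUnitary : Matrix (Fin n) (Fin n) ℝ)) = σ • 1 := by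
    have hev : ∀ i, hS.1.eigenvalues i = σ ^ 2 := by
      intro i
      have h1 : star (hS.1.eigenvectorBasis i).ofLp ⬝ᵥ (hS.1.eigenvectorBasis i).ofLp = 1 := by
        rw [dotProduct_comm, ← EuclideanSpace.inner_eq_star_dotProduct, real_inner_self_eq_norm_sq,
          (hS.1.eigenvectorBasis).orthonormal.1 i]
        norm_num
      rw [hS.1.eigenvalues_eq, Matrix.smul_mulVec, Matrix.one_mulVec, dotProduct_smul, h1]
      simp
    have hd : diagonal (Real.sqrt ∘ hS.1.eigenvalues) = σ • (1 : Matrix (Fin n) (Fin n) ℝ) := by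
      ext i j
      by_cases hij : i = j
      · subst hij
        simp [hev i, Real.sqrt_sq hσ.le]
      · simp [hij]
    rw [hd, Matrix.mul_smul, Matrix.mul_one, Matrix.smul_mul, Unitary.mul_star_self_of_mem (SetLike.coe_mem _)]
  have hlaw' : Measure.map X Pr = Measure.map (fun x => μ + σ • x) G := by
    rw [hlaw, multiGaussian, dif_pos hS, hsqrt]
    congr 1
    funext x
    rw [Matrix.smul_mulVec, Matrix.one_mulVec]
  -- decomposition setup
  set pp : Fin n → Prop := fun i => p i = true with hpp
  set r := MeasurableEquiv.piEquivPiSubtypeProd (fun _ : Fin n => ℝ) pp with hrdef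
  set Gs : Measure ({i // pp i} → ℝ) := Measure.pi fun _ => gaussianReal 0 1 with hGs
  set Gc : Measure ({i // ¬ pp i} → ℝ) := Measure.pi fun _ => gaussianReal 0 1 with hGc
  have hr : Measure.map r G = Gs.prod Gc :=
    (measurePreserving_piEquivPiSubtypeProd (fun _ : Fin n => gaussianReal 0 1) pp).map_eq
  set φ₁ : ({i // pp i} → ℝ) → (Fin n → ℝ) := fun z =>
    P.mulVec μ + σ • Uᵀ.mulVec (fun i => if h : pp i then z ⟨i, h⟩ else 0) with hφ₁
  set φ₂ : ({i // ¬ pp i} → ℝ) → (Fin n → ℝ) := fun z =>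
    Q.mulVec μ + σ • Uᵀ.mulVec (fun i => if h : ¬ pp i then z ⟨i, h⟩ else 0) with hφ₂
  have hφ₁m : Measurable φ₁ := by
    apply Measurable.add measurable_const
    apply (measurable_const_smul σ).comp
    apply (measurable_mulVec Uᵀ).comp
    apply measurable_pi_lambda
    intro i
    by_cases h : pp i
    · simp only [dif_pos h]
      exact measurable_pi_apply _
    · simp only [dif_neg h]
      exact measurable_const
  have hφ₂m : Measurable φ₂ := by
    apply Measurable.add measurable_const
    apply (measurable_const_smul σ).comp
    apply (measurable_mulVec Uᵀ).comp
    apply measurable_pi_lambda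
    intro i
    by_cases h : ¬ pp i
    · simp only [dif_pos h]
      exact measurable_pi_apply _
    · simp only [dif_neg h]
      exact measurable_const
  -- key pointwise identities
  have hDvec : ∀ y : Fin n → ℝ, (fun i => if h : pp i then y i else 0) = D.mulVec y := by
    intro y
    funext i
    rw [hD, Matrix.mulVec_diagonal]
    by_cases h : pp i
    · rw [dif_pos h, if_pos h, one_mul]
    · rw [dif_neg h, if_neg h, zero_mul]
  have hDvec' : ∀ y : Fin n → ℝ, (fun i => if h : ¬ pp i then y i else 0) = (1 - D).mulVec y := by
    intro y
    funext i
    rw [Matrix.sub_mulVec, Matrix.one_mulVec]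
    simp only [Pi.sub_apply, hD, Matrix.mulVec_diagonal]
    by_cases h : pp i
    · rw [dif_neg (not_not.mpr h), if_pos h, one_mul, sub_self]
    · rw [dif_pos h, if_neg h, zero_mul, sub_zero]
  have hkey1 : ∀ x : Fin n → ℝ, P.mulVec (μ + σ • x) = φ₁ ((r (U.mulVec x)).1) := by
    intro x
    have h1 : (r (U.mulVec x)).1 = fun i : {i // pp i} => U.mulVec x i := rfl
    rw [hφ₁]
    simp only [h1]
    rw [hDvec (U.mulVec x), Matrix.mulVec_mulVec, Matrix.mulVec_mulVec, Matrix.mulVec_add,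
      Matrix.mulVec_smul, hPdec]
  have hkey2 : ∀ x : Fin n → ℝ, Q.mulVec (μ + σ • x) = φ₂ ((r (U.mulVec x)).2) := by
    intro x
    have h1 : (r (U.mulVec x)).2 = fun i : {i // ¬ pp i} => U.mulVec x i := rfl
    rw [hφ₂]
    simp only [h1]
    rw [hDvec' (U.mulVec x), Matrix.mulVec_mulVec, Matrix.mulVec_mulVec, Matrix.mulVec_add,
      Matrix.mulVec_smul, hQdec]
  -- the measures
  have haff : Measurable (fun x : Fin n → ℝ => μ + σ • x) :=
    measurable_const.add (measurable_id.const_smul σ)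
  have hTm : Measurable (fun x : Fin n → ℝ => (P.mulVec x, Q.mulVec x)) :=
    (measurable_mulVec P).prodMk (measurable_mulVec Q)
  have hjoint : Measure.map (fun ω => (P.mulVec (X ω), Q.mulVec (X ω))) Pr
      = (Measure.map φ₁ Gs).prod (Measure.map φ₂ Gc) := by
    calc Measure.map (fun ω => (P.mulVec (X ω), Q.mulVec (X ω))) Pr
        = Measure.map ((fun x => (P.mulVec x, Q.mulVec x)) ∘ X) Pr := rfl
      _ = Measure.map (fun x => (P.mulVec x, Q.mulVec x)) (Measure.map X Pr) :=
          (Measure.map_map hTm hX).symm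
      _ = Measure.map (fun x => (P.mulVec x, Q.mulVec x))
            (Measure.map (fun x => μ + σ • x) G) := by rw [hlaw']
      _ = Measure.map ((fun x => (P.mulVec x, Q.mulVec x)) ∘ (fun x => μ + σ • x)) G :=
          Measure.map_map hTm haff
      _ = Measure.map ((Prod.map φ₁ φ₂ ∘ r) ∘ U.mulVec) G := by
          congr 1
          funext x
          show (P.mulVec (μ + σ • x), Q.mulVec (μ + σ • x)) = _
          rw [hkey1 x, hkey2 x]
          rfl
      _ = Measure.map (Prod.map φ₁ φ₂ ∘ r) (Measure.map U.mulVec G) :=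
          (Measure.map_map ((hφ₁m.prodMap hφ₂m).comp r.measurable)
            (measurable_mulVec U)).symm
      _ = Measure.map (Prod.map φ₁ φ₂ ∘ r) G := by rw [hG, map_mulVec_gaussian_pi U hU]
      _ = Measure.map (Prod.map φ₁ φ₂) (Measure.map r G) :=
          (Measure.map_map (hφ₁m.prodMap hφ₂m) r.measurable).symm
      _ = Measure.map (Prod.map φ₁ φ₂) (Gs.prod Gc) := by rw [hr]
      _ = (Measure.map φ₁ Gs).prod (Measure.map φ₂ Gc) :=
          (Measure.map_prod_map _ _ hφ₁m hφ₂m).symm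
  have hmarg1 : Measure.map (fun ω => P.mulVec (X ω)) Pr = Measure.map φ₁ Gs := by
    calc Measure.map (fun ω => P.mulVec (X ω)) Pr
        = Measure.map (P.mulVec) (Measure.map X Pr) :=
          (Measure.map_map (measurable_mulVec P) hX).symm
      _ = Measure.map (P.mulVec) (Measure.map (fun x => μ + σ • x) G) := by rw [hlaw']
      _ = Measure.map (P.mulVec ∘ (fun x => μ + σ • x)) G :=
          Measure.map_map (measurable_mulVec P) haff
      _ = Measure.map ((φ₁ ∘ (Prod.fst ∘ r)) ∘ U.mulVec) G := by
          congr 1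
          funext x
          exact hkey1 x
      _ = Measure.map (φ₁ ∘ (Prod.fst ∘ r)) (Measure.map U.mulVec G) :=
          (Measure.map_map (hφ₁m.comp (measurable_fst.comp r.measurable))
            (measurable_mulVec U)).symm
      _ = Measure.map (φ₁ ∘ (Prod.fst ∘ r)) G := by rw [hG, map_mulVec_gaussian_pi U hU]
      _ = Measure.map φ₁ (Measure.map (Prod.fst ∘ r) G) :=
          (Measure.map_map hφ₁m (measurable_fst.comp r.measurable)).symm
      _ = Measure.map φ₁ (Measure.map Prod.fst (Measure.map r G)) := by
          rw [Measure.map_map measurable_fst r.measurable]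
      _ = Measure.map φ₁ (Measure.map Prod.fst (Gs.prod Gc)) := by rw [hr]
      _ = Measure.map φ₁ Gs := by rw [Measure.map_fst_prod, measure_univ, one_smul]
  have hmarg2 : Measure.map (fun ω => Q.mulVec (X ω)) Pr = Measure.map φ₂ Gc := by
    calc Measure.map (fun ω => Q.mulVec (X ω)) Pr
        = Measure.map (Q.mulVec) (Measure.map X Pr) :=
          (Measure.map_map (measurable_mulVec Q) hX).symm
      _ = Measure.map (Q.mulVec) (Measure.map (fun x => μ + σ • x) G) := by rw [hlaw']
      _ = Measure.map (Q.mulVec ∘ (fun x => μ + σ • x)) G :=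
          Measure.map_map (measurable_mulVec Q) haff
      _ = Measure.map ((φ₂ ∘ (Prod.snd ∘ r)) ∘ U.mulVec) G := by
          congr 1
          funext x
          exact hkey2 x
      _ = Measure.map (φ₂ ∘ (Prod.snd ∘ r)) (Measure.map U.mulVec G) :=
          (Measure.map_map (hφ₂m.comp (measurable_snd.comp r.measurable))
            (measurable_mulVec U)).symm
      _ = Measure.map (φ₂ ∘ (Prod.snd ∘ r)) G := by rw [hG, map_mulVec_gaussian_pi U hU]
      _ = Measure.map φ₂ (Measure.map (Prod.snd ∘ r) G) :=
          (Measure.map_map hφ₂m (measurable_snd.comp r.measurable)).symm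
      _ = Measure.map φ₂ (Measure.map Prod.snd (Measure.map r G)) := by
          rw [Measure.map_map measurable_snd r.measurable]
      _ = Measure.map φ₂ (Measure.map Prod.snd (Gs.prod Gc)) := by rw [hr]
      _ = Measure.map φ₂ Gc := by rw [Measure.map_snd_prod, measure_univ, one_smul]
  rw [indepFun_iff_map_prod_eq_prod_map_map (f := fun ω => P.mulVec (X ω))
    (g := fun ω => Q.mulVec (X ω))
    (Measurable.aemeasurable (by exact (measurable_mulVec P).comp hX))
    (Measurable.aemeasurable (by exact (measurable_mulVec Q).comp hX)), hjoint, hmarg1, hmarg2]
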